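/- arXiv:2402.12235 — 2 statements merged into one kernel-verified Lean document; each statement's English description precedes it below -/
import Mathlib

section
/- Conditional maximal leakage reduces to unconditional maximal leakage under a strictly positive posterior: if Y − X − Z is a Markov chain of finite random variables, and P_{Y|X}(y|x) > 0 for all x ∈ 𝕏 and y ∈ 𝕐 (with P_X strictly positive), then L(X → Z | Y) = L(X → Z), where L(X → Z | Y) = log(max_y ∑_z max_{x ∈ supp(X|Y=y)} P_{Z|X,Y}(z|x,y)) and L(X → Z) = log(∑_z max_x P_{Z|X}(z|x)). -/
open scoped BigOperators
noncomputable section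

/-- A joint pmf on a triple of finite alphabets (indexed x, y, z). -/
def IsJointPMF3 {X Y Z : Type} [Fintype X] [Fintype Y] [Fintype Z] (r : X → Y → Z → ℝ) : Prop :=
  (∀ x y z, 0 ≤ r x y z) ∧ ∑ x, ∑ y, ∑ z, r x y z = 1

/-- Markov chain Y − X − Z: Y and Z are conditionally independent given X. -/
def MarkovYXZ {X Y Z : Type} [Fintype Y] [Fintype Z] (r : X → Y → Z → ℝ) : Prop :=
  ∀ x y z, r x y z * (∑ y', ∑ z', r x y' z') = (∑ z', r x y z') * (∑ y', r x y' z)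

/-- Conditional maximal leakage, closed form:
L(X → Z | Y) = log₂(max_y ∑_z max_{x ∈ supp(X|Y=y)} P_{Z|X,Y}(z|x,y)),
where supp(X|Y=y) = {x : P_{X,Y}(x,y) > 0}. -/
def condMaxLeak {X Y Z : Type} [Fintype X] [Fintype Y] [Fintype Z] [Nonempty X] [Nonempty Y]
    (r : X → Y → Z → ℝ) : ℝ :=
  Real.logb 2 (Finset.univ.sup' Finset.univ_nonempty fun y =>
    ∑ z, Finset.univ.sup' Finset.univ_nonempty fun x =>
      if 0 < ∑ z', r x y z' then r x y z / ∑ z', r x y z' else 0)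

/-- Closed form of maximal leakage: L(X → Z) = log₂(∑_z max_x P_{Z|X}(z|x)). -/
def maxLeak {X Z : Type} [Fintype X] [Fintype Z] [Nonempty X] (p : X → Z → ℝ) : ℝ :=
  Real.logb 2 (∑ z, Finset.univ.sup' Finset.univ_nonempty fun x => p x z / ∑ z', p x z')

/-- under a strictly positive posterior P_{Y|X} (and strictly positive P_X),
for a Markov chain Y − X − Z, conditional maximal leakage equals unconditional maximal
leakage: L(X → Z | Y) = L(X → Z). -/
theorem cond_maximal_leakage_eq_maximal_leakage
    {X Y Z : Type} [Fintype X] [Fintype Y] [Fintype Z] [Nonempty X] [Nonempty Y] [Nonempty Z]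
    (r : X → Y → Z → ℝ) (hr : IsJointPMF3 r) (hmc : MarkovYXZ r)
    (hcardX : 1 < Fintype.card X) (hcardY : 1 < Fintype.card Y)
    (hX : ∀ x, 0 < ∑ y, ∑ z, r x y z)
    (hpos : ∀ x y, 0 < (∑ z, r x y z) / (∑ y', ∑ z', r x y' z')) :
    condMaxLeak r = maxLeak (fun x z => ∑ y, r x y z) := by
  classical
  have hq : ∀ x y, 0 < ∑ z', r x y z' := by
    intro x y
    have h := hpos x y
    have hx := hX x
    have := mul_pos h hx
    rwa [div_mul_cancel₀ _ (ne_of_gt hx)] at this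
  have hratio : ∀ x y z, r x y z / (∑ z', r x y z') =
      (∑ y', r x y' z) / (∑ z', ∑ y', r x y' z') := by
    intro x y z
    have hpx := hX x
    have hq' := hq x y
    have hden : (∑ z', ∑ y', r x y' z') = ∑ y, ∑ z, r x y z := Finset.sum_comm
    rw [hden, div_eq_div_iff (ne_of_gt hq') (ne_of_gt hpx)]
    rw [hmc x y z, mul_comm]
  unfold condMaxLeak maxLeak
  congr 1
  have hc : ∀ y ∈ (Finset.univ : Finset Y),
      (∑ z, Finset.univ.sup' Finset.univ_nonempty fun x =>
        if 0 < ∑ z', r x y z' then r x y z / ∑ z', r x y z' else 0) =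
      (∑ z, Finset.univ.sup' Finset.univ_nonempty fun x =>
        (∑ y', r x y' z) / ∑ z', ∑ y', r x y' z') := by
    intro y _
    refine Finset.sum_congr rfl fun z _ => ?_
    refine Finset.sup'_congr _ rfl fun x _ => ?_
    rw [if_pos (hq x y), hratio]
  rw [Finset.sup'_congr Finset.univ_nonempty rfl hc, Finset.sup'_const]
end
end

section
/- If the posterior is strictly positive and the support of X given Y = y equals the full support of X for every y, then for a Markov chain Y − X − Z, the chain X − Y − Z holds (i.e., X ⟂ Z | Y) if and only if Z is independent of X. -/
open scoped BigOperators
noncomputable section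

/-- for a Markov chain Y − X − Z with strictly positive posterior and
supp(X|Y=y) = supp(X) for every y, the chain X − Y − Z (X ⟂ Z | Y) holds iff
Z is independent of X. -/
theorem perfect_lpp_iff_independent
    {X Y Z : Type} [Fintype X] [Fintype Y] [Fintype Z] [Nonempty X] [Nonempty Y] [Nonempty Z]
    (r : X → Y → Z → ℝ) (hr : IsJointPMF3 r) (hmc : MarkovYXZ r)
    (hcardY : 1 < Fintype.card Y)
    (hpos : ∀ x y, 0 < ∑ y', ∑ z', r x y' z' → 0 < (∑ z, r x y z) / (∑ y', ∑ z', r x y' z'))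
    (hsupp : ∀ y, {x | 0 < (∑ z, r x y z) / (∑ x', ∑ z, r x' y z)}
                    = {x | 0 < ∑ y', ∑ z', r x y' z'}) :
    (∀ x y z, r x y z * (∑ x', ∑ z', r x' y z') = (∑ z', r x y z') * (∑ x', r x' y z)) ↔
      (∀ x z, (∑ y, r x y z) = (∑ y, ∑ z', r x y z') * (∑ x', ∑ y, r x' y z)) := by
  obtain ⟨hr0, hrsum⟩ := hr
  have hnn1 : ∀ x y, (0:ℝ) ≤ ∑ z, r x y z := fun x y => Finset.sum_nonneg fun z _ => hr0 x y z
  have hnnpx : ∀ x, (0:ℝ) ≤ ∑ y, ∑ z, r x y z := fun x => Finset.sum_nonneg fun y _ => hnn1 x y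
  have hnnpy : ∀ y, (0:ℝ) ≤ ∑ x, ∑ z, r x y z := fun y => Finset.sum_nonneg fun x _ => hnn1 x y
  have hpx_zero : ∀ x, (∑ y, ∑ z, r x y z) = 0 → ∀ y, (∑ z, r x y z) = 0 := by
    intro x hx y
    exact (Finset.sum_eq_zero_iff_of_nonneg (fun y _ => hnn1 x y)).mp hx y (Finset.mem_univ y)
  have hr_zero : ∀ x y, (∑ z, r x y z) = 0 → ∀ z, r x y z = 0 := by
    intro x y h z
    exact (Finset.sum_eq_zero_iff_of_nonneg (fun z _ => hr0 x y z)).mp h z (Finset.mem_univ z)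
  -- the marginal of Y is strictly positive everywhere
  have hpy_pos : ∀ y, 0 < ∑ x, ∑ z, r x y z := by
    intro y
    obtain ⟨x0, hx0⟩ : ∃ x, 0 < ∑ y, ∑ z, r x y z := by
      by_contra h
      push_neg at h
      have : (∑ x, ∑ y, ∑ z, r x y z) = 0 :=
        Finset.sum_eq_zero fun x _ => le_antisymm (h x) (hnnpx x)
      linarith
    have hmem : x0 ∈ {x | 0 < (∑ z, r x y z) / (∑ x', ∑ z, r x' y z)} := by
      rw [hsupp y]; exact hx0
    by_contra h
    push_neg at h
    have h0 : (∑ x, ∑ z, r x y z) = 0 := le_antisymm h (hnnpy y)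
    simp only [Set.mem_setOf_eq, h0, div_zero] at hmem
    exact lt_irrefl 0 hmem
  -- strictly positive posterior ⇒ p(x,y) > 0 when p(x) > 0
  have hpxy_pos : ∀ x y, 0 < (∑ y', ∑ z', r x y' z') → 0 < ∑ z, r x y z := by
    intro x y hx
    have h2 : 0 < (∑ z, r x y z) / (∑ y', ∑ z', r x y' z') * (∑ y', ∑ z', r x y' z') :=
      mul_pos (hpos x y hx) hx
    rwa [div_mul_cancel₀ _ (ne_of_gt hx)] at h2
  constructor
  · intro hXYZ x z
    -- key identity: p(x,z) p(y) = p(y,z) p(x) for all x, y, z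
    have hstar : ∀ x y z,
        (∑ y', r x y' z) * (∑ x', ∑ z', r x' y z')
          = (∑ x', r x' y z) * (∑ y', ∑ z', r x y' z') := by
      intro x y z
      by_cases hx : 0 < ∑ y', ∑ z', r x y' z'
      · refine mul_left_cancel₀ (ne_of_gt (hpxy_pos x y hx)) ?_
        linear_combination (∑ y', ∑ z', r x y' z') * hXYZ x y z
          - (∑ x', ∑ z', r x' y z') * hmc x y z
      · have hx0 : (∑ y', ∑ z', r x y' z') = 0 := le_antisymm (not_lt.mp hx) (hnnpx x)
        have hC : (∑ y', r x y' z) = 0 :=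
          Finset.sum_eq_zero fun y' _ => hr_zero x y' (hpx_zero x hx0 y') z
        rw [hC, hx0, zero_mul, mul_zero]
    obtain ⟨y0⟩ := (inferInstance : Nonempty Y)
    -- summing hstar over x gives p(y0,z) = p(z) p(y0)
    have hyz : (∑ x', r x' y0 z)
        = (∑ x', ∑ y, r x' y z) * (∑ x', ∑ z', r x' y0 z') := by
      have h1 : ∑ x', ((∑ y', r x' y' z) * (∑ x'', ∑ z', r x'' y0 z'))
          = ∑ x', ((∑ x'', r x'' y0 z) * (∑ y', ∑ z', r x' y' z')) :=
        Finset.sum_congr rfl fun x' _ => hstar x' y0 z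
      rw [← Finset.sum_mul, ← Finset.mul_sum, hrsum, mul_one] at h1
      exact h1.symm
    refine mul_right_cancel₀ (ne_of_gt (hpy_pos y0)) ?_
    linear_combination hstar x y0 z + (∑ y, ∑ z', r x y z') * hyz
  · intro hind x y z
    -- r x y z = p(x,y) p(z) for all x
    have hkey : ∀ x, r x y z = (∑ z', r x y z') * (∑ x', ∑ y', r x' y' z) := by
      intro x
      by_cases hx : 0 < ∑ y', ∑ z', r x y' z'
      · refine mul_right_cancel₀ (ne_of_gt hx) ?_
        linear_combination hmc x y z + (∑ z', r x y z') * hind x z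
      · have hx0 : (∑ y', ∑ z', r x y' z') = 0 := le_antisymm (not_lt.mp hx) (hnnpx x)
        rw [hr_zero x y (hpx_zero x hx0 y) z, hpx_zero x hx0 y, zero_mul]
    have hyz : (∑ x', r x' y z)
        = (∑ x', ∑ z', r x' y z') * (∑ x'', ∑ y', r x'' y' z) := by
      calc (∑ x', r x' y z)
          = ∑ x', ((∑ z', r x' y z') * (∑ x'', ∑ y', r x'' y' z)) :=
            Finset.sum_congr rfl fun x' _ => hkey x'
        _ = (∑ x', ∑ z', r x' y z') * (∑ x'', ∑ y', r x'' y' z) := by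
            rw [Finset.sum_mul]
    linear_combination (∑ x', ∑ z', r x' y z') * hkey x - (∑ z', r x y z') * hyz
end
end
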